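/- Let E1, E2 > 0 with E1 = ∫ sqrt(κ1)|p| f(p) dp and E2 = ∫ E(p) f(p) dp for a nonnegative f that is not concentrated at the origin, so that E3 := E2 − E1 > 0. Then with δ chosen so that δ κ1^{-1/2} sqrt(κ2) E2 = E3/2, one has ∫_{|p| ≥ δ} |p|^2 f(p) dp ≥ E3/(2 sqrt(κ2)), using the identity E(p) − sqrt(κ1)|p| = κ2|p|^3/(sqrt(κ1) + sqrt(κ1 + κ2|p|^2)) ≤ sqrt(κ2)|p|^2. -/

import Mathlib

open MeasureTheory

set_option maxHeartbeats 1000000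

noncomputable def Edisp (κ1 κ2 : ℝ) (p : EuclideanSpace ℝ (Fin 3)) : ℝ :=
  Real.sqrt (κ1 * ‖p‖ ^ 2 + κ2 * ‖p‖ ^ 4)

/-- With `E1 = ∫ √κ1 |p| f`, `E2 = ∫ E f`, `E3 = E2 − E1 > 0`, and `δ` chosen
so that `δ κ1^{-1/2} √κ2 E2 = E3/2`, one has
`∫_{|p| ≥ δ} |p|² f ≥ E3/(2√κ2)`. -/
theorem mass_away_from_origin (κ1 κ2 : ℝ) (hκ1 : 0 < κ1) (hκ2 : 0 < κ2)
    (f : EuclideanSpace ℝ (Fin 3) → ℝ) (hf : ∀ p, 0 ≤ f p)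
    (h1 : Integrable (fun p : EuclideanSpace ℝ (Fin 3) => ‖p‖ * f p))
    (hE : Integrable (fun p : EuclideanSpace ℝ (Fin 3) => Edisp κ1 κ2 p * f p))
    (h2 : Integrable (fun p : EuclideanSpace ℝ (Fin 3) => ‖p‖ ^ 2 * f p))
    (E1 E2 E3 δ : ℝ)
    (hE1 : E1 = ∫ p : EuclideanSpace ℝ (Fin 3), Real.sqrt κ1 * ‖p‖ * f p)
    (hE2 : E2 = ∫ p : EuclideanSpace ℝ (Fin 3), Edisp κ1 κ2 p * f p)
    (hE3 : E3 = E2 - E1) (hE3pos : 0 < E3)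
    (hδ : δ * κ1 ^ (-(1 : ℝ) / 2) * Real.sqrt κ2 * E2 = E3 / 2) :
    E3 / (2 * Real.sqrt κ2) ≤
      ∫ p in {p : EuclideanSpace ℝ (Fin 3) | δ ≤ ‖p‖}, ‖p‖ ^ 2 * f p := by
  have hs1 : (0:ℝ) < Real.sqrt κ1 := Real.sqrt_pos.mpr hκ1
  have hs2 : (0:ℝ) < Real.sqrt κ2 := Real.sqrt_pos.mpr hκ2
  have hs1sq : Real.sqrt κ1 ^ 2 = κ1 := Real.sq_sqrt hκ1.le
  have hs2sq : Real.sqrt κ2 ^ 2 = κ2 := Real.sq_sqrt hκ2.le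
  -- rewrite the rpow in hδ
  have hrpow : κ1 ^ (-(1 : ℝ) / 2) = (Real.sqrt κ1)⁻¹ := by
    rw [neg_div, Real.rpow_neg hκ1.le, Real.sqrt_eq_rpow]
  rw [hrpow] at hδ
  -- pointwise facts
  have hA : ∀ p : EuclideanSpace ℝ (Fin 3), Real.sqrt κ1 * ‖p‖ ≤ Edisp κ1 κ2 p := by
    intro p
    have h : Real.sqrt κ1 * ‖p‖ = Real.sqrt (κ1 * ‖p‖^2) := by
      rw [Real.sqrt_mul hκ1.le, Real.sqrt_sq (norm_nonneg p)]
    rw [h, Edisp]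
    apply Real.sqrt_le_sqrt
    nlinarith [sq_nonneg (‖p‖^2), hκ2.le]
  have hA2 : ∀ p : EuclideanSpace ℝ (Fin 3), Real.sqrt κ2 * ‖p‖^2 ≤ Edisp κ1 κ2 p := by
    intro p
    have h : Real.sqrt κ2 * ‖p‖^2 = Real.sqrt (κ2 * ‖p‖^4) := by
      rw [Real.sqrt_mul hκ2.le]
      congr 1
      rw [show ‖p‖^4 = (‖p‖^2)^2 by ring, Real.sqrt_sq (by positivity)]
    rw [h, Edisp]
    apply Real.sqrt_le_sqrt
    nlinarith [sq_nonneg ‖p‖, hκ1.le]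
  have hB : ∀ p : EuclideanSpace ℝ (Fin 3),
      Edisp κ1 κ2 p ≤ Real.sqrt κ1 * ‖p‖ + Real.sqrt κ2 * ‖p‖^2 := by
    intro p
    have hnn : 0 ≤ Real.sqrt κ1 * ‖p‖ + Real.sqrt κ2 * ‖p‖^2 := by positivity
    rw [Edisp, show Real.sqrt κ1 * ‖p‖ + Real.sqrt κ2 * ‖p‖^2
        = Real.sqrt ((Real.sqrt κ1 * ‖p‖ + Real.sqrt κ2 * ‖p‖^2)^2) from
        (Real.sqrt_sq hnn).symm]
    apply Real.sqrt_le_sqrt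
    have expand : (Real.sqrt κ1 * ‖p‖ + Real.sqrt κ2 * ‖p‖^2)^2
        = κ1 * ‖p‖^2 + κ2 * ‖p‖^4 + 2 * (Real.sqrt κ1 * Real.sqrt κ2) * ‖p‖^3 := by
      linear_combination ‖p‖^2 * hs1sq + ‖p‖^4 * hs2sq
    rw [expand]
    have : 0 ≤ Real.sqrt κ1 * Real.sqrt κ2 * ‖p‖^3 :=
      mul_nonneg (mul_nonneg hs1.le hs2.le) (pow_nonneg (norm_nonneg p) 3)
    linarith
  have hC : ∀ p : EuclideanSpace ℝ (Fin 3),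
      Edisp κ1 κ2 p ≤ Real.sqrt κ1 * ‖p‖ + (κ2 / Real.sqrt κ1) * ‖p‖^3 := by
    intro p
    have hnn : 0 ≤ Real.sqrt κ1 * ‖p‖ + (κ2 / Real.sqrt κ1) * ‖p‖^3 := by positivity
    rw [Edisp, show Real.sqrt κ1 * ‖p‖ + (κ2 / Real.sqrt κ1) * ‖p‖^3
        = Real.sqrt ((Real.sqrt κ1 * ‖p‖ + (κ2 / Real.sqrt κ1) * ‖p‖^3)^2) from
        (Real.sqrt_sq hnn).symm]
    apply Real.sqrt_le_sqrt
    have key : Real.sqrt κ1 * (κ2 / Real.sqrt κ1) = κ2 := by field_simp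
    nlinarith [sq_nonneg (‖p‖^3), sq_nonneg ‖p‖, div_nonneg hκ2.le hs1.le, sq_nonneg (‖p‖^2),
      mul_nonneg (div_nonneg hκ2.le hs1.le) (pow_nonneg (norm_nonneg p) 3)]
  set g : EuclideanSpace ℝ (Fin 3) → ℝ :=
    fun p => (Edisp κ1 κ2 p - Real.sqrt κ1 * ‖p‖) * f p with hgdef
  have h1' : Integrable (fun p : EuclideanSpace ℝ (Fin 3) => Real.sqrt κ1 * ‖p‖ * f p) := by
    have := h1.const_mul (Real.sqrt κ1)
    simpa [mul_assoc] using this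
  have hg : Integrable g := by
    have := hE.sub h1'
    exact this.congr (Filter.Eventually.of_forall fun p => by simp [hgdef, sub_mul])
  have hE3g : E3 = ∫ p, g p := by
    rw [hE3, hE2, hE1, ← integral_sub hE h1']
    congr 1
    ext p
    simp [hgdef, sub_mul]
  set S : Set (EuclideanSpace ℝ (Fin 3)) := {p | δ ≤ ‖p‖} with hSdef
  have hS : MeasurableSet S := (isClosed_le continuous_const continuous_norm).measurableSet
  have hsplit : E3 = (∫ p in S, g p) + ∫ p in Sᶜ, g p := by
    rw [hE3g, integral_add_compl hS hg]
  -- E2 nonneg hence positivity of δ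
  have hE2nn : 0 ≤ E2 := by
    rw [hE2]
    exact integral_nonneg fun p => mul_nonneg (Real.sqrt_nonneg _) (hf p)
  have hδE2 : 0 < δ * E2 := by
    nlinarith [hδ, hE3pos, mul_pos (inv_pos.mpr hs1) hs2]
  have hE2pos : 0 < E2 := by
    rcases hE2nn.lt_or_eq with h | h
    · exact h
    · exfalso; rw [← h, mul_zero] at hδE2; exact lt_irrefl 0 hδE2
  have hδpos : 0 < δ := by
    nlinarith
  -- total second moment bound
  have hmom : Real.sqrt κ2 * ∫ p, ‖p‖^2 * f p ≤ E2 := by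
    rw [hE2, ← integral_const_mul]
    apply integral_mono (h2.const_mul _) hE
    intro p
    have := mul_le_mul_of_nonneg_right (hA2 p) (hf p)
    calc Real.sqrt κ2 * (‖p‖^2 * f p) = Real.sqrt κ2 * ‖p‖^2 * f p := by ring
      _ ≤ Edisp κ1 κ2 p * f p := this
  have hmomnn : 0 ≤ ∫ p, ‖p‖^2 * f p :=
    integral_nonneg fun p => mul_nonneg (by positivity) (hf p)
  -- complement bound
  have hcompl : ∫ p in Sᶜ, g p ≤ E3 / 2 := by
    have c_nn : 0 ≤ κ2 / Real.sqrt κ1 * δ := by positivity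
    have step1 : ∫ p in Sᶜ, g p ≤ ∫ p in Sᶜ, (κ2 / Real.sqrt κ1 * δ) * (‖p‖^2 * f p) := by
      apply setIntegral_mono_on hg.integrableOn ((h2.const_mul _).integrableOn) hS.compl
      intro p hp
      have hpδ : ‖p‖ ≤ δ := by
        simp only [hSdef, Set.mem_compl_iff, Set.mem_setOf_eq, not_le] at hp
        exact hp.le
      have h3 : ‖p‖^3 ≤ δ * ‖p‖^2 := by nlinarith [norm_nonneg p, sq_nonneg ‖p‖]
      have t1 : g p ≤ (κ2 / Real.sqrt κ1 * ‖p‖^3) * f p := by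
        apply mul_le_mul_of_nonneg_right _ (hf p)
        linarith [hC p]
      have t2 : (κ2 / Real.sqrt κ1 * ‖p‖^3) * f p ≤ (κ2 / Real.sqrt κ1 * δ) * (‖p‖^2 * f p) := by
        have := mul_le_mul_of_nonneg_right
          (mul_le_mul_of_nonneg_left h3 (div_nonneg hκ2.le hs1.le)) (hf p)
        calc (κ2 / Real.sqrt κ1 * ‖p‖^3) * f p ≤ (κ2 / Real.sqrt κ1 * (δ * ‖p‖^2)) * f p := this
          _ = (κ2 / Real.sqrt κ1 * δ) * (‖p‖^2 * f p) := by ring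
      linarith
    have step2 : ∫ p in Sᶜ, (κ2 / Real.sqrt κ1 * δ) * (‖p‖^2 * f p)
        = (κ2 / Real.sqrt κ1 * δ) * ∫ p in Sᶜ, ‖p‖^2 * f p := integral_const_mul _ _
    have step3 : ∫ p in Sᶜ, ‖p‖^2 * f p ≤ ∫ p, ‖p‖^2 * f p :=
      setIntegral_le_integral h2
        (Filter.Eventually.of_forall fun p => mul_nonneg (by positivity) (hf p))
    have step4 : ∫ p, ‖p‖^2 * f p ≤ E2 / Real.sqrt κ2 := by
      rw [le_div_iff₀ hs2]
      linarith [hmom]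
    have hcoef : κ2 / Real.sqrt κ1 * δ * (E2 / Real.sqrt κ2)
        = δ * (Real.sqrt κ1)⁻¹ * Real.sqrt κ2 * E2 := by
      field_simp
      linear_combination (-1 : ℝ) * hs2sq
    calc ∫ p in Sᶜ, g p ≤ (κ2 / Real.sqrt κ1 * δ) * ∫ p in Sᶜ, ‖p‖^2 * f p := by
          rw [← step2]; exact step1
      _ ≤ (κ2 / Real.sqrt κ1 * δ) * (E2 / Real.sqrt κ2) := by
          apply mul_le_mul_of_nonneg_left _ c_nn
          linarith
      _ = E3 / 2 := by rw [hcoef, hδ]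
  -- main set bound
  have hSbound : ∫ p in S, g p ≤ Real.sqrt κ2 * ∫ p in S, ‖p‖^2 * f p := by
    rw [← integral_const_mul]
    apply setIntegral_mono_on hg.integrableOn ((h2.const_mul _).integrableOn) hS
    intro p _
    have := mul_le_mul_of_nonneg_right (by linarith [hB p] :
      Edisp κ1 κ2 p - Real.sqrt κ1 * ‖p‖ ≤ Real.sqrt κ2 * ‖p‖^2) (hf p)
    calc g p ≤ Real.sqrt κ2 * ‖p‖^2 * f p := this
      _ = Real.sqrt κ2 * (‖p‖^2 * f p) := by ring
  have hfinal : E3 / 2 ≤ Real.sqrt κ2 * ∫ p in S, ‖p‖^2 * f p := by linarith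
  rw [mul_comm] at hfinal
  rw [← div_div, div_le_iff₀ hs2]
  linarith [hfinal]
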